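/- Under the attributed Erdős–Rényi graph pair model G(n,p,s_u; m,q,s_a) with q = o(1), s_a = Θ(1), and a constant Δ_x > 0 satisfying Δ_x m q s_a² ≥ 3 log n, let S1 = {(i,j) : C_ij > x} with x = Δ_x m q s_a² / log(1/q). Then with probability tending to 1 as n → ∞, every pair (i,j) ∈ S1 satisfies j = Π*(i); in particular, with probability tending to 1 no two distinct pairs in S1 share a coordinate. -/

import Mathlib

open MeasureTheory ProbabilityTheory Filter Finset

noncomputable section

namespace AttrAlign

/-- The Bernoulli measure on `Bool` with success probability `r` (clamped to `[0,1]`). -/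
def bern (r : ℝ) : Measure Bool :=
  (PMF.bernoulli (min (Real.toNNReal r) 1) (min_le_right _ _)).toMeasure

/-- The uniform measure on a finite type (the zero measure if the type is empty). -/
def uniformMeasure (α : Type*) [Fintype α] [MeasurableSpace α] : Measure α := by
  classical
  exact if h : Nonempty α then (@PMF.uniformOfFintype α _ h).toMeasure else 0

instance permMeasurableSpace (n : ℕ) : MeasurableSpace (Equiv.Perm (Fin n)) := ⊤

/-- Sample space for the attributed Erdős–Rényi graph pair model `G(n,p,s_u; m,q,s_a)`:
base user–user edge indicators, base user–attribute edge indicators, the two subsampling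
indicator families for `G₁`, the two subsampling indicator families for `G₂`, and the
anonymizing permutation `Π*`.  Only the entries with `i < j` of the user–user indicator
matrices are used. -/
abbrev Config (n m : ℕ) :=
  (Fin n → Fin n → Bool) × (Fin n → Fin m → Bool) ×
    (Fin n → Fin n → Bool) × (Fin n → Fin m → Bool) ×
    (Fin n → Fin n → Bool) × (Fin n → Fin m → Bool) × Equiv.Perm (Fin n)

/-- i.i.d. `Bern(r)` measure on a `k × l` matrix of Booleans. -/
def edgeMeasure (k l : ℕ) (r : ℝ) : Measure (Fin k → Fin l → Bool) :=
  Measure.pi fun _ => Measure.pi fun _ => bern r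

/-- The law of the attributed Erdős–Rényi graph pair model `G(n,p,s_u; m,q,s_a)`:
all edge indicators are independent, base user–user edges are `Bern(p)`, base
user–attribute edges are `Bern(q)`, the user–user subsampling indicators are `Bern(s_u)`,
the user–attribute subsampling indicators are `Bern(s_a)`, and the permutation `Π*` is
uniform. -/
def attrMeasure (n m : ℕ) (p q su sa : ℝ) : Measure (Config n m) :=
  (edgeMeasure n n p).prod ((edgeMeasure n m q).prod ((edgeMeasure n n su).prod
    ((edgeMeasure n m sa).prod ((edgeMeasure n n su).prod
      ((edgeMeasure n m sa).prod (uniformMeasure (Equiv.Perm (Fin n))))))))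

variable {n m : ℕ}

def uu0 (ω : Config n m) : Fin n → Fin n → Bool := ω.1
def ua0 (ω : Config n m) : Fin n → Fin m → Bool := ω.2.1
def suG1 (ω : Config n m) : Fin n → Fin n → Bool := ω.2.2.1
def saG1 (ω : Config n m) : Fin n → Fin m → Bool := ω.2.2.2.1
def suG2 (ω : Config n m) : Fin n → Fin n → Bool := ω.2.2.2.2.1
def saG2 (ω : Config n m) : Fin n → Fin m → Bool := ω.2.2.2.2.2.1
/-- The true permutation `Π*`. -/
def pstar (ω : Config n m) : Equiv.Perm (Fin n) := ω.2.2.2.2.2.2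

/-- Symmetrized edge indicator on unordered pairs of users (no self loops). -/
def symEdge {k : ℕ} (f : Fin k → Fin k → Bool) (i j : Fin k) : Bool :=
  if i < j then f i j else if j < i then f j i else false

/-- Adjacency of users `i` and `j` in `G₁`. -/
def G1uu (ω : Config n m) (i j : Fin n) : Bool :=
  symEdge (fun a b => uu0 ω a b && suG1 ω a b) i j

/-- Adjacency of users `i` and `j` in `G₂`. -/
def G2uu (ω : Config n m) (i j : Fin n) : Bool :=
  symEdge (fun a b => uu0 ω a b && suG2 ω a b) i j

/-- Adjacency of users `i` and `j` in the anonymized graph `G₂'`, obtained by applying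
`Π*` to the users of `G₂`. -/
def G2puu (ω : Config n m) (i j : Fin n) : Bool :=
  G2uu ω ((pstar ω).symm i) ((pstar ω).symm j)

/-- Adjacency of user `i` and attribute `a` in `G₁`. -/
def G1ua (ω : Config n m) (i : Fin n) (a : Fin m) : Bool := ua0 ω i a && saG1 ω i a

/-- Adjacency of user `i` and attribute `a` in `G₂`. -/
def G2ua (ω : Config n m) (i : Fin n) (a : Fin m) : Bool := ua0 ω i a && saG2 ω i a

/-- Adjacency of user `j` and attribute `a` in the anonymized graph `G₂'`. -/
def G2pua (ω : Config n m) (j : Fin n) (a : Fin m) : Bool :=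
  G2ua ω ((pstar ω).symm j) a

/-- `C i j`: the number of attributes adjacent to user `i` in `G₁` and to user `j` in `G₂'`. -/
def CC (ω : Config n m) (i j : Fin n) : ℕ :=
  (univ.filter fun a : Fin m => G1ua ω i a = true ∧ G2pua ω j a = true).card

/-- The anchor set `{(i,j) : C_ij > x}`. -/
def anchors (x : ℝ) (ω : Config n m) : Finset (Fin n × Fin n) := by
  classical exact univ.filter fun ij : Fin n × Fin n => x < (CC ω ij.1 ij.2 : ℝ)

/-- No two distinct pairs of `S` share a coordinate. -/
def noConflict {k : ℕ} (S : Finset (Fin k × Fin k)) : Prop :=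
  ∀ a ∈ S, ∀ b ∈ S, (a.1 = b.1 ∨ a.2 = b.2) → a = b

/-- Users of `G₁` not matched by the anchor set `S`. -/
def unmatched1 (S : Finset (Fin n × Fin n)) : Finset (Fin n) := by
  classical exact univ.filter fun i : Fin n => ∀ j, (i, j) ∉ S

/-- Users of `G₂'` not matched by the anchor set `S`. -/
def unmatched2 (S : Finset (Fin n × Fin n)) : Finset (Fin n) := by
  classical exact univ.filter fun j : Fin n => ∀ i, (i, j) ∉ S

/-- `W i j`: the number of pairs `(k,l) ∈ S` with `k` adjacent to `i` in `G₁` and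
`l` adjacent to `j` in `G₂'`. -/
def W (ω : Config n m) (S : Finset (Fin n × Fin n)) (i j : Fin n) : ℕ := by
  classical
  exact (S.filter fun kl : Fin n × Fin n =>
    G1uu ω i kl.1 = true ∧ G2puu ω j kl.2 = true).card

end AttrAlign

-- auxiliary lemmas (to be inserted before the main theorem)

section Aux
open scoped ENNReal
namespace AttrAlign

variable {n m : ℕ}

instance (n : ℕ) : MeasurableSingletonClass (Equiv.Perm (Fin n)) := ⟨fun _ => trivial⟩
instance (r : ℝ) : IsProbabilityMeasure (bern r) := PMF.toMeasure.isProbabilityMeasure _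
instance (k l : ℕ) (r : ℝ) : IsProbabilityMeasure (edgeMeasure k l r) := by
  unfold edgeMeasure; infer_instance
instance (n : ℕ) : IsProbabilityMeasure (uniformMeasure (Equiv.Perm (Fin n))) := by
  unfold uniformMeasure
  rw [dif_pos (⟨1⟩ : Nonempty (Equiv.Perm (Fin n)))]
  exact PMF.toMeasure.isProbabilityMeasure _
instance (n m : ℕ) (p q su sa : ℝ) : IsProbabilityMeasure (attrMeasure n m p q su sa) := by
  unfold attrMeasure; infer_instance

lemma measurableSet_config (s : Set (Config n m)) : MeasurableSet s := s.toFinite.measurableSet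

lemma bern_true {r : ℝ} (h1 : r ≤ 1) : bern r {true} = ENNReal.ofReal r := by
  rw [bern, PMF.toMeasure_apply_singleton _ _ (measurableSet_singleton _)]
  have : (Real.toNNReal r) ≤ 1 := by simpa using Real.toNNReal_mono h1
  rw [PMF.bernoulli_apply]
  simp [min_eq_left this, ENNReal.ofReal, h1]

lemma pi_row {m : ℕ} {r : ℝ} (h1 : r ≤ 1) (T : Finset (Fin m)) :
    (Measure.pi fun _ : Fin m => bern r) {g | ∀ a ∈ T, g a = true}
      = ENNReal.ofReal r ^ T.card := by
  classical
  have hset : {g : Fin m → Bool | ∀ a ∈ T, g a = true}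
      = Set.univ.pi (fun a => if a ∈ T then ({true} : Set Bool) else Set.univ) := by
    ext g
    simp only [Set.mem_setOf_eq, Set.mem_pi, Set.mem_univ, forall_true_left]
    constructor
    · intro h a; split_ifs with ha
      · simpa using h a ha
      · trivial
    · intro h a ha; have := h a; rw [if_pos ha] at this; simpa using this
  rw [hset, Measure.pi_pi]
  have : ∀ a : Fin m, bern r (if a ∈ T then ({true} : Set Bool) else Set.univ)
      = if a ∈ T then ENNReal.ofReal r else 1 := by
    intro a; split_ifs
    · exact bern_true h1
    · exact measure_univ
  rw [Finset.prod_congr rfl fun a _ => this a, Finset.prod_ite_mem, Finset.univ_inter,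
    Finset.prod_const]

lemma edge_one_row {k m : ℕ} {r : ℝ} (h1 : r ≤ 1) (i : Fin k) (T : Finset (Fin m)) :
    edgeMeasure k m r {f | ∀ a ∈ T, f i a = true} = ENNReal.ofReal r ^ T.card := by
  classical
  have hset : {f : Fin k → Fin m → Bool | ∀ a ∈ T, f i a = true}
      = Set.univ.pi (fun i' => if i' = i then {g | ∀ a ∈ T, g a = true} else Set.univ) := by
    ext f
    simp only [Set.mem_setOf_eq, Set.mem_pi, Set.mem_univ, forall_true_left]
    constructor
    · intro h i'; split_ifs with hi
      · subst hi; exact h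
      · trivial
    · intro h; have := h i; rwa [if_pos rfl] at this
  rw [edgeMeasure, hset, Measure.pi_pi]
  have : ∀ i' : Fin k, (Measure.pi fun _ : Fin m => bern r)
        (if i' = i then {g | ∀ a ∈ T, g a = true} else Set.univ)
      = if i' = i then ENNReal.ofReal r ^ T.card else 1 := by
    intro i'; split_ifs
    · exact pi_row h1 T
    · exact measure_univ
  rw [Finset.prod_congr rfl fun a _ => this a, Finset.prod_ite_eq', if_pos (Finset.mem_univ i)]

lemma edge_two_rows {k m : ℕ} {r : ℝ} (h1 : r ≤ 1) {i j : Fin k} (hij : i ≠ j)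
    (T : Finset (Fin m)) :
    edgeMeasure k m r {f | (∀ a ∈ T, f i a = true) ∧ (∀ a ∈ T, f j a = true)}
      = ENNReal.ofReal r ^ (2 * T.card) := by
  classical
  have hset : {f : Fin k → Fin m → Bool | (∀ a ∈ T, f i a = true) ∧ (∀ a ∈ T, f j a = true)}
      = Set.univ.pi (fun i' => if i' ∈ ({i, j} : Finset (Fin k))
          then {g | ∀ a ∈ T, g a = true} else Set.univ) := by
    ext f
    simp only [Set.mem_setOf_eq, Set.mem_pi, Set.mem_univ, forall_true_left]
    constructor
    · rintro ⟨h₁, h₂⟩ i'; split_ifs with hi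
      · rcases Finset.mem_insert.mp hi with h | h
        · subst h; exact h₁
        · rw [Finset.mem_singleton] at h; subst h; exact h₂
      · trivial
    · intro h
      refine ⟨?_, ?_⟩
      · have := h i; rwa [if_pos (by simp)] at this
      · have := h j; rwa [if_pos (by simp)] at this
  rw [edgeMeasure, hset, Measure.pi_pi]
  have : ∀ i' : Fin k, (Measure.pi fun _ : Fin m => bern r)
        (if i' ∈ ({i, j} : Finset (Fin k)) then {g | ∀ a ∈ T, g a = true} else Set.univ)
      = if i' ∈ ({i, j} : Finset (Fin k)) then ENNReal.ofReal r ^ T.card else 1 := by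
    intro i'; split_ifs
    · exact pi_row h1 T
    · exact measure_univ
  rw [Finset.prod_congr rfl fun a _ => this a, Finset.prod_ite_mem, Finset.univ_inter,
    Finset.prod_const, Finset.card_insert_of_notMem (by simpa using hij),
    Finset.card_singleton, ← pow_mul, mul_comm]

/-- The four-indicator predicate underlying `CC` for a wrong pair. -/
def Dpred (ω : Config n m) (i j : Fin n) (a : Fin m) : Prop :=
  ua0 ω i a = true ∧ saG1 ω i a = true ∧ ua0 ω j a = true ∧ saG2 ω j a = true

instance (ω : Config n m) (i j : Fin n) : DecidablePred (Dpred ω i j) := fun _ => by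
  unfold Dpred; infer_instance

set_option synthInstance.maxHeartbeats 1000000 in
lemma event_measure {p q su sa : ℝ} (hq1 : q ≤ 1) (hsa1 : sa ≤ 1) {i j : Fin n} (hij : i ≠ j)
    (T : Finset (Fin m)) :
    attrMeasure n m p q su sa {ω : Config n m | ∀ a ∈ T, Dpred ω i j a}
      = ENNReal.ofReal q ^ (2 * T.card)
        * (ENNReal.ofReal sa ^ T.card * ENNReal.ofReal sa ^ T.card) := by
  have hset : {ω : Config n m | ∀ a ∈ T, Dpred ω i j a}
      = (Set.univ ×ˢ (({f : Fin n → Fin m → Bool |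
            (∀ a ∈ T, f i a = true) ∧ (∀ a ∈ T, f j a = true)}) ×ˢ
          (Set.univ ×ˢ (({f : Fin n → Fin m → Bool | ∀ a ∈ T, f i a = true}) ×ˢ
            (Set.univ ×ˢ (({f : Fin n → Fin m → Bool | ∀ a ∈ T, f j a = true}) ×ˢ
              Set.univ)))))) := by
    ext ⟨w1, w2, w3, w4, w5, w6, w7⟩
    simp only [Set.mem_setOf_eq, Set.mem_prod, Set.mem_univ, true_and, and_true,
      Dpred, ua0, saG1, saG2]
    constructor
    · intro h
      exact ⟨⟨fun a ha => (h a ha).1, fun a ha => (h a ha).2.2.1⟩,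
        fun a ha => (h a ha).2.1, fun a ha => (h a ha).2.2.2⟩
    · rintro ⟨⟨h1, h3⟩, h2, h4⟩ a ha
      exact ⟨h1 a ha, h2 a ha, h3 a ha, h4 a ha⟩
  rw [attrMeasure, hset, Measure.prod_prod, Measure.prod_prod, Measure.prod_prod,
    Measure.prod_prod, Measure.prod_prod, Measure.prod_prod,
    measure_univ, measure_univ, measure_univ,
    edge_two_rows hq1 hij T, edge_one_row hsa1 i T, edge_one_row hsa1 j T]
  ring

set_option synthInstance.maxHeartbeats 1000000 in
lemma bad_bound {p q su sa : ℝ} (hq1 : q ≤ 1) (hsa1 : sa ≤ 1) (k : ℕ) :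
    attrMeasure n m p q su sa {ω : Config n m | ∃ i j : Fin n, i ≠ j ∧
        k ≤ (univ.filter fun a => Dpred ω i j a).card}
      ≤ (n : ℝ≥0∞) ^ 2 * (m.choose k) *
        (ENNReal.ofReal q ^ (2 * k) * (ENNReal.ofReal sa ^ k * ENNReal.ofReal sa ^ k)) := by
  classical
  set v := ENNReal.ofReal q ^ (2 * k) * (ENNReal.ofReal sa ^ k * ENNReal.ofReal sa ^ k) with hv
  have hsub : {ω : Config n m | ∃ i j : Fin n, i ≠ j ∧
        k ≤ (univ.filter fun a => Dpred ω i j a).card}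
      ⊆ ⋃ ij ∈ (univ : Finset (Fin n)).offDiag,
          ⋃ T ∈ Finset.powersetCard k (univ : Finset (Fin m)),
          {ω : Config n m | ∀ a ∈ T, Dpred ω ij.1 ij.2 a} := by
    intro ω hω
    obtain ⟨i, j, hij, hk⟩ := hω
    obtain ⟨T, hTsub, hTcard⟩ := Finset.exists_subset_card_eq hk
    simp only [Set.mem_iUnion]
    refine ⟨(i, j), Finset.mem_offDiag.mpr ⟨mem_univ _, mem_univ _, hij⟩, T,
      Finset.mem_powersetCard_univ.mpr hTcard, fun a ha => ?_⟩
    exact (Finset.mem_filter.mp (hTsub ha)).2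
  calc attrMeasure n m p q su sa {ω : Config n m | ∃ i j : Fin n, i ≠ j ∧
        k ≤ (univ.filter fun a => Dpred ω i j a).card}
      ≤ attrMeasure n m p q su sa (⋃ ij ∈ (univ : Finset (Fin n)).offDiag,
          ⋃ T ∈ Finset.powersetCard k (univ : Finset (Fin m)),
          {ω : Config n m | ∀ a ∈ T, Dpred ω ij.1 ij.2 a}) := measure_mono hsub
    _ ≤ ∑ ij ∈ (univ : Finset (Fin n)).offDiag,
          attrMeasure n m p q su sa (⋃ T ∈ Finset.powersetCard k (univ : Finset (Fin m)),
          {ω : Config n m | ∀ a ∈ T, Dpred ω ij.1 ij.2 a}) := measure_biUnion_finset_le _ _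
    _ ≤ ∑ ij ∈ (univ : Finset (Fin n)).offDiag,
          ∑ T ∈ Finset.powersetCard k (univ : Finset (Fin m)),
          attrMeasure n m p q su sa {ω : Config n m | ∀ a ∈ T, Dpred ω ij.1 ij.2 a} :=
        Finset.sum_le_sum fun ij _ => measure_biUnion_finset_le _ _
    _ = ∑ ij ∈ (univ : Finset (Fin n)).offDiag,
          ∑ _T ∈ Finset.powersetCard k (univ : Finset (Fin m)), v := by
        refine Finset.sum_congr rfl fun ij hij => Finset.sum_congr rfl fun T hT => ?_
        rw [event_measure hq1 hsa1 (Finset.mem_offDiag.mp hij).2.2 T,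
          Finset.mem_powersetCard_univ.mp hT]
    _ = ((univ : Finset (Fin n)).offDiag.card : ℝ≥0∞) * ((m.choose k : ℝ≥0∞) * v) := by
        simp [Finset.sum_const, Finset.card_powersetCard, mul_assoc]
    _ ≤ (n : ℝ≥0∞) ^ 2 * ((m.choose k : ℝ≥0∞) * v) := by
        gcongr
        have hcard : ((univ : Finset (Fin n)).offDiag.card) ≤ n ^ 2 := by
          calc (univ : Finset (Fin n)).offDiag.card
              ≤ Fintype.card (Fin n × Fin n) := Finset.card_le_univ _
            _ = n ^ 2 := by simp [sq]
        exact_mod_cast hcard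
    _ = (n : ℝ≥0∞) ^ 2 * (m.choose k : ℝ≥0∞) * v := by ring

end AttrAlign
end Aux

section Asym
namespace AttrAlign

lemma r_tendsto_zero (q sa : ℕ → ℝ) (m K : ℕ → ℕ) (Δx : ℝ)
    (hq01 : ∀ n, 0 < q n ∧ q n < 1) (hsa01 : ∀ n, 0 < sa n ∧ sa n ≤ 1)
    (hq : Tendsto q atTop (nhds 0)) (hΔx : 0 < Δx)
    (hΔx' : ∀ n : ℕ, 3 * Real.log n ≤ Δx * ((m n : ℝ) * q n * (sa n) ^ 2))
    (hK : ∀ n, K n = ⌊Δx * ((m n : ℝ) * q n * (sa n) ^ 2) / Real.log (1 / q n)⌋₊ + 1) :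
    Tendsto (fun n : ℕ => (n : ℝ) ^ 2 * ((m n).choose (K n) : ℝ)
      * ((q n) ^ 2 * (sa n) ^ 2) ^ (K n)) atTop (nhds 0) := by
  set L : ℕ → ℝ := fun n => Real.log (1 / q n) with hLdef
  have hL : ∀ n, 0 < L n := fun n =>
    Real.log_pos (one_lt_one_div (hq01 n).1 (hq01 n).2)
  have hLeq : ∀ n, L n = -Real.log (q n) := fun n => by
    simp only [hLdef, one_div, Real.log_inv]
  have hLtop : Tendsto L atTop atTop := by
    have h1 : Tendsto (fun n => Real.log (q n)) atTop atBot :=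
      Real.tendsto_log_nhdsGT_zero.comp
        (tendsto_nhdsWithin_iff.mpr ⟨hq, Eventually.of_forall fun n => (hq01 n).1⟩)
    have : L = fun n => -Real.log (q n) := funext hLeq
    rw [this]
    exact tendsto_neg_atBot_atTop.comp h1
  -- c n := exp 1 * (q n * L n) / Δx tends to 0
  have hqexp : ∀ n, q n = Real.exp (-(L n)) := fun n => by
    rw [hLeq, neg_neg, Real.exp_log (hq01 n).1]
  have hc0 : Tendsto (fun n => Real.exp 1 * (q n * L n) / Δx) atTop (nhds 0) := by
    have h1 : Tendsto (fun n => L n ^ 1 * Real.exp (-(L n))) atTop (nhds 0) :=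
      (Real.tendsto_pow_mul_exp_neg_atTop_nhds_zero 1).comp hLtop
    have h2 : Tendsto (fun n => q n * L n) atTop (nhds 0) := by
      refine h1.congr fun n => ?_
      rw [pow_one, ← hqexp n, mul_comm]
    have := (h2.const_mul (Real.exp 1)).div_const Δx
    simpa [mul_div_assoc] using this
  have far_c : ∀ᶠ n in atTop, Real.exp 1 * (q n * L n) / Δx ≤ 1 :=
    hc0.eventually (eventually_le_nhds (by norm_num))
  have far_u : ∀ᶠ n in atTop, 1 + Real.log (L n) - Real.log Δx ≤ L n / 6 := by
    have hbig : ∀ᶠ y in atTop, 1 + Real.log y - Real.log Δx ≤ y / 6 := by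
      have hlog := Real.isLittleO_log_id_atTop.def (by norm_num : (0:ℝ) < 1/12)
      filter_upwards [hlog, eventually_ge_atTop (12 * (1 - Real.log Δx)),
        eventually_ge_atTop (0:ℝ)] with y h1 h2 h3
      have habs : |Real.log y| ≤ (1/12) * |y| := by
        simpa [Real.norm_eq_abs] using h1
      have h4 : Real.log y ≤ y / 12 := by
        calc Real.log y ≤ |Real.log y| := le_abs_self _
          _ ≤ (1/12) * |y| := habs
          _ = y / 12 := by rw [abs_of_nonneg h3]; ring
      linarith
    exact hLtop.eventually hbig
  -- the eventual bound
  have hbound : ∀ᶠ n : ℕ in atTop, (n : ℝ) ^ 2 * ((m n).choose (K n) : ℝ)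
      * ((q n) ^ 2 * (sa n) ^ 2) ^ (K n) ≤ (n : ℝ) ^ (-(1/2) : ℝ) := by
    filter_upwards [far_c, far_u, eventually_ge_atTop 2] with n hc1 hu hn2
    obtain ⟨hQ0, hQ1⟩ := hq01 n
    obtain ⟨hS0, hS1⟩ := hsa01 n
    have hLn := hL n
    have hn1 : (1:ℝ) < n := by exact_mod_cast hn2
    have hN0 : (0:ℝ) < n := lt_trans one_pos hn1
    have hlogn : 0 < Real.log n := Real.log_pos hn1
    have hG : 3 * Real.log n ≤ Δx * ((m n : ℝ) * q n * (sa n) ^ 2) := hΔx' n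
    have hGpos : 0 < Δx * ((m n : ℝ) * q n * (sa n) ^ 2) :=
      lt_of_lt_of_le (by positivity) hG
    have hM0 : (0:ℝ) < (m n : ℝ) := by
      by_contra h
      push_neg at h
      have hM : (m n : ℝ) = 0 := le_antisymm h (Nat.cast_nonneg _)
      rw [hM] at hGpos; simp at hGpos
    set X : ℝ := Δx * ((m n : ℝ) * q n * (sa n) ^ 2) / L n with hXdef
    have hX0 : 0 < X := div_pos hGpos hLn
    have hXK : X ≤ (K n : ℝ) := by
      rw [hK n]
      push_cast
      exact (Nat.lt_floor_add_one X).le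
    have hK0 : (0:ℝ) < (K n : ℝ) := lt_of_lt_of_le hX0 hXK
    have hKfact : (0:ℝ) < ((K n).factorial : ℝ) := by exact_mod_cast (K n).factorial_pos
    have hKK : (0:ℝ) < ((K n : ℝ)) ^ (K n) := by positivity
    set c : ℝ := Real.exp 1 * (q n * L n) / Δx with hcdef
    have hcpos : 0 < c := by positivity
    -- step 1 : choose bound
    have hA : ((m n).choose (K n) : ℝ) ≤ ((m n : ℝ)) ^ (K n) / ((K n).factorial : ℝ) := by
      have := Nat.choose_le_pow_div (α := ℝ) (K n) (m n)
      simpa using this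
    -- step 2 : factorial bound
    have hkey : (1:ℝ) / ((K n).factorial : ℝ) ≤ Real.exp (K n) / ((K n : ℝ)) ^ (K n) := by
      rw [div_le_div_iff₀ hKfact hKK, one_mul, ← div_le_iff₀ hKfact]
      exact Real.pow_div_factorial_le_exp _ hK0.le (K n)
    have hstep2 : (n : ℝ) ^ 2 * ((m n).choose (K n) : ℝ) * ((q n) ^ 2 * (sa n) ^ 2) ^ (K n)
        ≤ (n : ℝ) ^ 2 * (Real.exp 1 * ((m n : ℝ) * (q n) ^ 2 * (sa n) ^ 2) / (K n)) ^ (K n) := by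
      calc (n : ℝ) ^ 2 * ((m n).choose (K n) : ℝ) * ((q n) ^ 2 * (sa n) ^ 2) ^ (K n)
          ≤ (n : ℝ) ^ 2 * ((m n : ℝ) ^ (K n) / ((K n).factorial : ℝ)) * ((q n) ^ 2 * (sa n) ^ 2) ^ (K n) := by
            gcongr
        _ = (n : ℝ) ^ 2 * (((m n : ℝ) * (q n) ^ 2 * (sa n) ^ 2) ^ (K n) * (1 / ((K n).factorial : ℝ))) := by
            ring
        _ ≤ (n : ℝ) ^ 2 * (((m n : ℝ) * (q n) ^ 2 * (sa n) ^ 2) ^ (K n)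
              * (Real.exp (K n) / ((K n : ℝ)) ^ (K n))) := by
            gcongr
        _ = (n : ℝ) ^ 2 * (Real.exp 1 * ((m n : ℝ) * (q n) ^ 2 * (sa n) ^ 2) / (K n)) ^ (K n) := by
            have hmp := Real.exp_one_pow (K n)
            conv_rhs => rw [div_pow, mul_pow, hmp]
            ring
    -- step 3 : replace K by X in denominator
    have hC : Real.exp 1 * ((m n : ℝ) * (q n) ^ 2 * (sa n) ^ 2) / (K n) ≤ c := by
      have h1 : Real.exp 1 * ((m n : ℝ) * (q n) ^ 2 * (sa n) ^ 2) / (K n)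
          ≤ Real.exp 1 * ((m n : ℝ) * (q n) ^ 2 * (sa n) ^ 2) / X := by
        gcongr
      have h2 : Real.exp 1 * ((m n : ℝ) * (q n) ^ 2 * (sa n) ^ 2) / X = c := by
        rw [hXdef, hcdef]
        field_simp
      rw [h2] at h1; exact h1
    have hstep3 : (n : ℝ) ^ 2 * (Real.exp 1 * ((m n : ℝ) * (q n) ^ 2 * (sa n) ^ 2) / (K n)) ^ (K n)
        ≤ (n : ℝ) ^ 2 * c ^ (K n) :=
      mul_le_mul_of_nonneg_left (pow_le_pow_left₀ (by positivity) hC (K n)) (by positivity)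
    -- step 4 : from c^K to exp
    have hstep4 : c ^ (K n) ≤ Real.exp (X * Real.log c) := by
      calc c ^ (K n) = c ^ ((K n : ℕ) : ℝ) := (Real.rpow_natCast c (K n)).symm
        _ ≤ c ^ X := Real.rpow_le_rpow_of_exponent_ge hcpos hc1 hXK
        _ = Real.exp (Real.log c * X) := Real.rpow_def_of_pos hcpos X
        _ = Real.exp (X * Real.log c) := by rw [mul_comm]
    -- step 5 : bound the exponent
    have hlogQ : Real.log (q n) = -(L n) := by rw [hLeq]; ring
    have hlogc : Real.log c ≤ -(5/6) * L n := by
      have hQL : q n * L n ≠ 0 := by positivity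
      have hexp1 : Real.exp 1 ≠ 0 := Real.exp_ne_zero 1
      have hlc : Real.log c = 1 + (Real.log (q n) + Real.log (L n)) - Real.log Δx := by
        rw [hcdef, Real.log_div (by positivity) (ne_of_gt hΔx),
          Real.log_mul hexp1 hQL, Real.log_mul (ne_of_gt hQ0) (ne_of_gt hLn), Real.log_exp]
      rw [hlc, hlogQ]
      linarith
    have hXL : X * L n = Δx * ((m n : ℝ) * q n * (sa n) ^ 2) := by
      rw [hXdef]
      field_simp
    have hE : X * Real.log c ≤ -(5/2) * Real.log n := by
      have h1 : X * Real.log c ≤ X * (-(5/6) * L n) :=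
        mul_le_mul_of_nonneg_left hlogc hX0.le
      have h2 : X * (-(5/6) * L n) = -(5/6) * (X * L n) := by ring
      rw [h2, hXL] at h1
      nlinarith [hG]
    -- step 6 : conclude
    have hfinal : (n : ℝ) ^ 2 * Real.exp (-(5/2) * Real.log n) = (n : ℝ) ^ (-(1/2) : ℝ) := by
      have e1 : Real.exp (-(5/2) * Real.log n) = (n : ℝ) ^ (-(5/2) : ℝ) := by
        rw [Real.rpow_def_of_pos hN0, mul_comm]
      have e2 : (n : ℝ) ^ (2:ℕ) = (n : ℝ) ^ ((2:ℕ) : ℝ) := (Real.rpow_natCast _ 2).symm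
      rw [e1, e2, ← Real.rpow_add hN0]
      norm_num
    calc (n : ℝ) ^ 2 * ((m n).choose (K n) : ℝ) * ((q n) ^ 2 * (sa n) ^ 2) ^ (K n)
        ≤ (n : ℝ) ^ 2 * c ^ (K n) := le_trans hstep2 hstep3
      _ ≤ (n : ℝ) ^ 2 * Real.exp (X * Real.log c) :=
          mul_le_mul_of_nonneg_left hstep4 (by positivity)
      _ ≤ (n : ℝ) ^ 2 * Real.exp (-(5/2) * Real.log n) :=
          mul_le_mul_of_nonneg_left (Real.exp_le_exp.mpr hE) (by positivity)
      _ = (n : ℝ) ^ (-(1/2) : ℝ) := hfinal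
  -- squeeze
  have hrpow : Tendsto (fun n : ℕ => (n : ℝ) ^ (-(1/2) : ℝ)) atTop (nhds 0) := by
    have h := (tendsto_rpow_neg_atTop (y := (1/2 : ℝ)) (by norm_num)).comp
      (tendsto_natCast_atTop_atTop (R := ℝ))
    exact h
  refine tendsto_of_tendsto_of_tendsto_of_le_of_le' tendsto_const_nhds hrpow ?_ hbound
  filter_upwards with n
  positivity

end AttrAlign
end Asym

section Aux2
open scoped ENNReal
namespace AttrAlign

set_option maxHeartbeats 1000000 in
set_option synthInstance.maxHeartbeats 1000000 in
lemma good_compl_bound {n m : ℕ} {p q su sa Δx : ℝ}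
    (hq0 : 0 < q) (hq1 : q < 1) (hsa0 : 0 < sa) (hsa1 : sa ≤ 1) (hΔx : 0 < Δx) :
    attrMeasure n m p q su sa
      {ω : Config n m | ∀ i j : Fin n,
        Δx * ((m : ℝ) * q * sa ^ 2) / Real.log (1 / q) < (CC ω i j : ℝ) → j = pstar ω i}ᶜ
      ≤ ENNReal.ofReal ((n : ℝ) ^ 2
          * (m.choose (⌊Δx * ((m : ℝ) * q * sa ^ 2) / Real.log (1 / q)⌋₊ + 1) : ℝ)
          * ((q ^ 2 * sa ^ 2) ^ (⌊Δx * ((m : ℝ) * q * sa ^ 2) / Real.log (1 / q)⌋₊ + 1))) := by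
  classical
  set x : ℝ := Δx * ((m : ℝ) * q * sa ^ 2) / Real.log (1 / q) with hxdef
  set k : ℕ := ⌊x⌋₊ + 1 with hkdef
  have hL : 0 < Real.log (1 / q) := Real.log_pos (one_lt_one_div hq0 hq1)
  have hx0 : 0 ≤ x := by
    apply div_nonneg _ hL.le
    exact mul_nonneg hΔx.le (mul_nonneg (mul_nonneg (Nat.cast_nonneg _) hq0.le) (sq_nonneg _))
  have hincl : {ω : Config n m | ∀ i j : Fin n, x < (CC ω i j : ℝ) → j = pstar ω i}ᶜ
      ⊆ {ω : Config n m | ∃ i j : Fin n, i ≠ j ∧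
          k ≤ (univ.filter fun a => Dpred ω i j a).card} := by
    intro ω hω
    simp only [Set.mem_compl_iff, Set.mem_setOf_eq] at hω
    push_neg at hω
    obtain ⟨i, j, hlt, hne⟩ := hω
    have hCCeq : CC ω i j = (univ.filter fun a => Dpred ω i ((pstar ω).symm j) a).card := by
      unfold CC
      congr 1
      apply Finset.filter_congr
      intro a _
      simp only [G1ua, G2pua, G2ua, Dpred, Bool.and_eq_true]
      tauto
    refine ⟨i, (pstar ω).symm j, ?_, ?_⟩
    · intro h
      exact hne (by rw [h, Equiv.apply_symm_apply])
    · rw [← hCCeq]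
      exact (Nat.floor_lt hx0).mpr hlt
  calc attrMeasure n m p q su sa
        {ω : Config n m | ∀ i j : Fin n, x < (CC ω i j : ℝ) → j = pstar ω i}ᶜ
      ≤ attrMeasure n m p q su sa {ω : Config n m | ∃ i j : Fin n, i ≠ j ∧
          k ≤ (univ.filter fun a => Dpred ω i j a).card} := measure_mono hincl
    _ ≤ (n : ℝ≥0∞) ^ 2 * (m.choose k) *
          (ENNReal.ofReal q ^ (2 * k) * (ENNReal.ofReal sa ^ k * ENNReal.ofReal sa ^ k)) :=
        bad_bound hq1.le hsa1 k
    _ = ENNReal.ofReal ((n : ℝ) ^ 2 * (m.choose k : ℝ) * ((q ^ 2 * sa ^ 2) ^ k)) := by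
        rw [ENNReal.ofReal_mul (by positivity), ENNReal.ofReal_mul (by positivity),
          ENNReal.ofReal_pow (by positivity), ENNReal.ofReal_natCast, ENNReal.ofReal_natCast,
          ENNReal.ofReal_pow (by positivity), ENNReal.ofReal_mul (by positivity),
          ENNReal.ofReal_pow hq0.le, ENNReal.ofReal_pow hsa0.le, pow_mul]
        ring

end AttrAlign
end Aux2

open AttrAlign

/-- Under the attributed Erdős–Rényi graph pair model with `q = o(1)`, `s_a = Θ(1)`
and a constant `Δ_x > 0` satisfying `Δ_x m q s_a² ≥ 3 log n`, the anchor set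
`S₁ = {(i,j) : C_ij > x}` with `x = Δ_x m q s_a² / log(1/q)` contains, with probability
tending to `1`, only correct pairs `(i, Π*(i))`; in particular, with probability tending
to `1` no two distinct pairs in `S₁` share a coordinate. -/
theorem anchors_attrRich_all_correct
    (p q su sa : ℕ → ℝ) (m : ℕ → ℕ) (Δx : ℝ)
    (hp01 : ∀ n, 0 ≤ p n ∧ p n ≤ 1) (hq01 : ∀ n, 0 < q n ∧ q n < 1)
    (hsu01 : ∀ n, 0 ≤ su n ∧ su n ≤ 1) (hsa01 : ∀ n, 0 < sa n ∧ sa n ≤ 1)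
    (hq : Tendsto q atTop (nhds 0))
    (hsa : ∃ c > 0, ∀ᶠ n : ℕ in atTop, c ≤ sa n)
    (hΔx : 0 < Δx)
    (hΔx' : ∀ n : ℕ, 3 * Real.log n ≤ Δx * ((m n : ℝ) * q n * (sa n) ^ 2)) :
    Tendsto (fun n =>
        attrMeasure n (m n) (p n) (q n) (su n) (sa n)
          {ω : Config n (m n) | ∀ i j : Fin n,
            Δx * ((m n : ℝ) * q n * (sa n) ^ 2) / Real.log (1 / q n) < (CC ω i j : ℝ) →
              j = pstar ω i})
      atTop (nhds 1) ∧
    Tendsto (fun n =>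
        attrMeasure n (m n) (p n) (q n) (su n) (sa n)
          {ω : Config n (m n) |
            noConflict (anchors
              (Δx * ((m n : ℝ) * q n * (sa n) ^ 2) / Real.log (1 / q n)) ω)})
      atTop (nhds 1)  := by
  classical
  have hfirst : Tendsto (fun n =>
      attrMeasure n (m n) (p n) (q n) (su n) (sa n)
        {ω : Config n (m n) | ∀ i j : Fin n,
          Δx * ((m n : ℝ) * q n * (sa n) ^ 2) / Real.log (1 / q n) < (CC ω i j : ℝ) →
            j = pstar ω i}) atTop (nhds 1) := by
    have hr := r_tendsto_zero q sa m
      (fun n => ⌊Δx * ((m n : ℝ) * q n * (sa n) ^ 2) / Real.log (1 / q n)⌋₊ + 1)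
      Δx hq01 hsa01 hq hΔx hΔx' (fun n => rfl)
    have hof : Tendsto (fun n : ℕ => ENNReal.ofReal ((n : ℝ) ^ 2
        * ((m n).choose (⌊Δx * ((m n : ℝ) * q n * (sa n) ^ 2) / Real.log (1 / q n)⌋₊ + 1) : ℝ)
        * ((q n) ^ 2 * (sa n) ^ 2)
            ^ (⌊Δx * ((m n : ℝ) * q n * (sa n) ^ 2) / Real.log (1 / q n)⌋₊ + 1)))
        atTop (nhds 0) := by
      simpa using ENNReal.tendsto_ofReal hr
    have hsub1 : Tendsto (fun n : ℕ => 1 - ENNReal.ofReal ((n : ℝ) ^ 2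
        * ((m n).choose (⌊Δx * ((m n : ℝ) * q n * (sa n) ^ 2) / Real.log (1 / q n)⌋₊ + 1) : ℝ)
        * ((q n) ^ 2 * (sa n) ^ 2)
            ^ (⌊Δx * ((m n : ℝ) * q n * (sa n) ^ 2) / Real.log (1 / q n)⌋₊ + 1)))
        atTop (nhds 1) := by
      have := ENNReal.Tendsto.sub (tendsto_const_nhds (x := (1 : ENNReal))) hof
        (Or.inl ENNReal.one_ne_top)
      simpa using this
    refine tendsto_of_tendsto_of_tendsto_of_le_of_le hsub1 tendsto_const_nhds
      (fun n => ?_) (fun n => prob_le_one)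
    have h1 : attrMeasure n (m n) (p n) (q n) (su n) (sa n)
        {ω : Config n (m n) | ∀ i j : Fin n,
          Δx * ((m n : ℝ) * q n * (sa n) ^ 2) / Real.log (1 / q n) < (CC ω i j : ℝ) →
            j = pstar ω i}
        = 1 - attrMeasure n (m n) (p n) (q n) (su n) (sa n)
          {ω : Config n (m n) | ∀ i j : Fin n,
            Δx * ((m n : ℝ) * q n * (sa n) ^ 2) / Real.log (1 / q n) < (CC ω i j : ℝ) →
              j = pstar ω i}ᶜ := by
      rw [← prob_compl_eq_one_sub (measurableSet_config _), compl_compl]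
    rw [h1]
    exact tsub_le_tsub_left (good_compl_bound (hq01 n).1 (hq01 n).2 (hsa01 n).1
      (hsa01 n).2 hΔx) 1
  refine ⟨hfirst, ?_⟩
  refine tendsto_of_tendsto_of_tendsto_of_le_of_le hfirst tendsto_const_nhds
    (fun n => ?_) (fun n => prob_le_one)
  apply measure_mono
  intro ω hω
  intro a ha b hb hshare
  have hxa := (Finset.mem_filter.mp ha).2
  have hxb := (Finset.mem_filter.mp hb).2
  have ha2 := hω a.1 a.2 hxa
  have hb2 := hω b.1 b.2 hxb
  rcases hshare with h | h
  · exact Prod.ext h (by rw [ha2, hb2, h])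
  · exact Prod.ext ((pstar ω).injective (by rw [← ha2, ← hb2, h])) h
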